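/- Let I be the union of the invariant radii: (0,α) if |a|_p < β; (0,α)∪(α,β) if |a|_p = β; (0, αβ/|a|_p) if |a|_p > β (where α ≤ β). For any r ∈ I, any closed ball V_ρ(c) contained in S_r(0), and any x,y ∈ V_ρ(c), one has |f(x)-f(y)|_p = |x-y|_p; hence f(V_ρ(c)) = V_ρ(f(c)). -/

import Mathlib

section helpers
variable {K : Type*} [NontriviallyNormedField K] [IsUltrametricDist K]

private lemma ultra_addle (x y : K) : ‖x + y‖ ≤ max ‖x‖ ‖y‖ :=
  IsUltrametricDist.norm_add_le_max x y

private lemma ultra_suble (x y : K) : ‖x - y‖ ≤ max ‖x‖ ‖y‖ := by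
  rw [sub_eq_add_neg]
  simpa using ultra_addle x (-y)

private lemma ultra_add_eq_left {x y : K} (h : ‖y‖ < ‖x‖) : ‖x + y‖ = ‖x‖ := by
  refine le_antisymm ((ultra_addle x y).trans (max_le le_rfl h.le)) ?_
  have h2 : ‖x‖ ≤ max ‖x + y‖ ‖y‖ := by
    calc ‖x‖ = ‖(x + y) - y‖ := by ring_nf
    _ ≤ max ‖x + y‖ ‖y‖ := ultra_suble _ _
  rcases max_cases ‖x + y‖ ‖y‖ with ⟨he, _⟩ | ⟨he, _⟩
  · rwa [he] at h2
  · rw [he] at h2; exact absurd h2 (not_le.2 h)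

private lemma ultra_sub_eq_left {x y : K} (h : ‖y‖ < ‖x‖) : ‖x - y‖ = ‖x‖ := by
  rw [sub_eq_add_neg]
  exact ultra_add_eq_left (by simpa using h)

private lemma ultra_add3_lt {x y z : K} {C : ℝ} (hx : ‖x‖ < C) (hy : ‖y‖ < C)
    (hz : ‖z‖ < C) : ‖x + y - z‖ < C :=
  (ultra_suble (x + y) z).trans_lt (max_lt ((ultra_addle x y).trans_lt (max_lt hx hy)) hz)

end helpers

private lemma quad_roots {K : Type*} [NontriviallyNormedField K] [IsAlgClosed K]
    [IsUltrametricDist K] (A2 A1 A0 : K) (h2 : A2 ≠ 0)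
    (hlt : ‖A0‖ * ‖A2‖ < ‖A1‖ ^ 2) :
    ∃ t₁ t₂ : K, A2 * t₁ ^ 2 + A1 * t₁ + A0 = 0 ∧ A2 * t₂ ^ 2 + A1 * t₂ + A0 = 0 ∧
      ‖t₁‖ = ‖A0‖ / ‖A1‖ ∧ ‖t₂‖ = ‖A1‖ / ‖A2‖ := by
  have h1 : A1 ≠ 0 := by
    intro h
    rw [h] at hlt
    simp only [norm_zero] at hlt
    nlinarith [norm_nonneg A0, norm_nonneg A2, hlt]
  set p := A1 / A2 with hpdef
  set q := A0 / A2 with hqdef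
  have h2n : (0:ℝ) < ‖A2‖ := norm_pos_iff.2 h2
  have h1n : (0:ℝ) < ‖A1‖ := norm_pos_iff.2 h1
  have hp : ‖p‖ = ‖A1‖ / ‖A2‖ := norm_div _ _
  have hq : ‖q‖ = ‖A0‖ / ‖A2‖ := norm_div _ _
  have hqp : ‖q‖ < ‖p‖ ^ 2 := by
    rw [hp, hq, div_pow, div_lt_div_iff₀ h2n (by positivity)]
    calc ‖A0‖ * ‖A2‖ ^ 2 = (‖A0‖ * ‖A2‖) * ‖A2‖ := by ring
    _ < ‖A1‖ ^ 2 * ‖A2‖ := by nlinarith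
  have hp0 : (0:ℝ) < ‖p‖ := by nlinarith [norm_nonneg q, norm_nonneg p]
  obtain ⟨s, hs⟩ := IsAlgClosed.exists_root
    (Polynomial.C 1 * Polynomial.X ^ 2 + Polynomial.C p * Polynomial.X + Polynomial.C q)
    (by rw [Polynomial.degree_quadratic one_ne_zero]; norm_num)
  have hseq : s ^ 2 + p * s + q = 0 := by
    simpa [Polynomial.IsRoot] using hs
  set s' := -p - s with hs'def
  have hsum : s + s' = -p := by rw [hs'def]; ring
  have hprod : s * s' = q := by rw [hs'def]; linear_combination -hseq
  have key : ∀ u v : K, u + v = -p → u * v = q → ‖u‖ ≤ ‖v‖ →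
      ‖u‖ = ‖q‖ / ‖p‖ ∧ ‖v‖ = ‖p‖ := by
    intro u v huv hprod' hle
    have hvp : ‖p‖ ≤ ‖v‖ := by
      have : ‖p‖ = ‖u + v‖ := by rw [huv, norm_neg]
      rw [this]
      exact (ultra_addle u v).trans (by rw [max_eq_right hle])
    have hv0 : (0:ℝ) < ‖v‖ := lt_of_lt_of_le hp0 hvp
    have hu : ‖u‖ = ‖q‖ / ‖v‖ := by
      field_simp
      rw [← norm_mul, hprod']
    have hult : ‖u‖ < ‖v‖ := by
      rw [hu]
      calc ‖q‖ / ‖v‖ ≤ ‖q‖ / ‖p‖ := by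
            apply div_le_div_of_nonneg_left (norm_nonneg q) hp0 hvp
      _ < ‖p‖ := by rw [div_lt_iff₀ hp0]; nlinarith
      _ ≤ ‖v‖ := hvp
    have hvexact : ‖v‖ = ‖p‖ := by
      have : ‖v + u‖ = ‖v‖ := ultra_add_eq_left hult
      rw [add_comm v u, huv, norm_neg] at this
      exact this.symm
    refine ⟨?_, hvexact⟩
    rw [hu, hvexact]
  have hpA : p * A2 = A1 := div_mul_cancel₀ _ h2
  have hqA : q * A2 = A0 := div_mul_cancel₀ _ h2
  have hroot : ∀ t : K, t ^ 2 + p * t + q = 0 → A2 * t ^ 2 + A1 * t + A0 = 0 := by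
    intro t ht
    linear_combination A2 * ht - t * hpA - hqA
  have hs'eq : s' ^ 2 + p * s' + q = 0 := by rw [hs'def]; linear_combination hseq
  rcases le_total ‖s‖ ‖s'‖ with h | h
  · obtain ⟨n1, n2⟩ := key s s' hsum hprod h
    exact ⟨s, s', hroot s hseq, hroot s' hs'eq, by rw [n1, hp, hq]; field_simp, by rw [n2, hp]⟩
  · obtain ⟨n1, n2⟩ := key s' s (by rw [add_comm]; exact hsum) (by rw [mul_comm]; exact hprod) h
    exact ⟨s', s, hroot s' hs'eq, hroot s hseq, by rw [n1, hp, hq]; field_simp, by rw [n2, hp]⟩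

set_option maxHeartbeats 1600000

/-- On any invariant sphere `S_r(0)` with `r` in the set `I` of invariant
radii, `f` is an isometry on each closed ball `V_ρ(c) ⊆ S_r(0)`, and maps
`V_ρ(c)` onto `V_ρ(f(c))`. -/
theorem stmt16 {K : Type*} [NontriviallyNormedField K] [IsAlgClosed K]
    [IsUltrametricDist K] (a b d z₁ z₂ : K) (hab : a*b ≠ 0) (had : a ≠ d)
    (hsum : z₁ + z₂ = -d) (hprod : z₁ * z₂ = b) (hαβ : ‖z₁‖ ≤ ‖z₂‖)
    (r ρ : ℝ) (c : K)
    (hr : r ∈ (if ‖a‖ < ‖z₂‖ then Set.Ioo (0:ℝ) ‖z₁‖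
      else if ‖a‖ = ‖z₂‖ then Set.Ioo (0:ℝ) ‖z₁‖ ∪ Set.Ioo ‖z₁‖ ‖z₂‖
      else Set.Ioo (0:ℝ) (‖z₁‖*‖z₂‖/‖a‖)))
    (hc : ‖c‖ = r) (hsub : ∀ x : K, ‖x - c‖ ≤ ρ → ‖x‖ = r) :
    (∀ x y : K, ‖x - c‖ ≤ ρ → ‖y - c‖ ≤ ρ →
      ‖(a*x^2 + b*x)/(x^2 + d*x + b) - (a*y^2 + b*y)/(y^2 + d*y + b)‖
        = ‖x - y‖) ∧
    (fun x : K => (a*x^2 + b*x)/(x^2 + d*x + b)) '' Metric.closedBall c ρ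
      = Metric.closedBall ((a*c^2 + b*c)/(c^2 + d*c + b)) ρ := by
  have ha0 : a ≠ 0 := fun h => hab (by rw [h, zero_mul])
  have hb0 : b ≠ 0 := fun h => hab (by rw [h, mul_zero])
  have hz1 : z₁ ≠ 0 := fun h => hb0 (by rw [← hprod, h, zero_mul])
  have hz2 : z₂ ≠ 0 := fun h => hb0 (by rw [← hprod, h, mul_zero])
  have hα : (0:ℝ) < ‖z₁‖ := norm_pos_iff.2 hz1
  have hβ : (0:ℝ) < ‖z₂‖ := norm_pos_iff.2 hz2
  have hA : (0:ℝ) < ‖a‖ := norm_pos_iff.2 ha0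
  have hbn : ‖b‖ = ‖z₁‖ * ‖z₂‖ := by rw [← hprod, norm_mul]
  have hdn : ‖d‖ ≤ ‖z₂‖ := by
    have hd' : d = -(z₁ + z₂) := by linear_combination hsum
    rw [hd', norm_neg]
    exact (ultra_addle z₁ z₂).trans (max_le hαβ le_rfl)
  have hfac : ∀ x : K, x^2 + d*x + b = (x - z₁) * (x - z₂) := by
    intro x
    linear_combination x * hsum - hprod
  -- extract the case information
  obtain ⟨hr0, hcase⟩ : 0 < r ∧ ((r < ‖z₁‖ ∧ ‖a‖ * r < ‖z₁‖ * ‖z₂‖) ∨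
      (‖z₁‖ < r ∧ r < ‖z₂‖ ∧ ‖a‖ = ‖z₂‖ ∧ ‖d‖ = ‖z₂‖)) := by
    split_ifs at hr with h1 h2
    · refine ⟨hr.1, Or.inl ⟨hr.2, ?_⟩⟩
      nlinarith [hr.1, hr.2]
    · rcases hr with hr | hr
      · refine ⟨hr.1, Or.inl ⟨hr.2, ?_⟩⟩
        nlinarith [hr.1, hr.2]
      · have hab' : ‖z₁‖ < ‖z₂‖ := hr.1.trans hr.2
        have hd2 : ‖d‖ = ‖z₂‖ := by
          have hd' : d = -(z₁ + z₂) := by linear_combination hsum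
          rw [hd', norm_neg, add_comm]
          exact ultra_add_eq_left hab'
        exact ⟨hα.trans hr.1, Or.inr ⟨hr.1, hr.2, h2, hd2⟩⟩
    · have hβA : ‖z₂‖ < ‖a‖ := lt_of_le_of_ne (not_lt.1 h1) (Ne.symm h2)
      refine ⟨hr.1, Or.inl ⟨?_, ?_⟩⟩
      · calc r < ‖z₁‖ * ‖z₂‖ / ‖a‖ := hr.2
        _ < ‖z₁‖ := by rw [div_lt_iff₀ hA]; nlinarith
      · have := hr.2
        rw [lt_div_iff₀ hA] at this
        linarith [this]
  have hrβ : r < ‖z₂‖ := by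
    rcases hcase with ⟨h1, _⟩ | ⟨_, h2, _, _⟩
    · exact h1.trans_le hαβ
    · exact h2
  have hrα : r ≠ ‖z₁‖ := by
    rcases hcase with ⟨h1, _⟩ | ⟨h1, _, _, _⟩
    · exact ne_of_lt h1
    · exact ne_of_gt h1
  -- norms of denominators on the sphere
  have hden : ∀ x : K, ‖x‖ = r → ‖x - z₁‖ = max r ‖z₁‖ ∧ ‖x - z₂‖ = ‖z₂‖ := by
    intro x hx
    constructor
    · rcases lt_or_gt_of_ne hrα with h | h
      · rw [max_eq_right h.le]
        have : ‖x - z₁‖ = ‖z₁ - x‖ := by rw [← norm_neg]; ring_nf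
        rw [this, ultra_sub_eq_left (by rw [hx]; exact h)]
      · rw [max_eq_left h.le, ultra_sub_eq_left (by rw [hx]; exact h), hx]
    · have : ‖x - z₂‖ = ‖z₂ - x‖ := by rw [← norm_neg]; ring_nf
      rw [this, ultra_sub_eq_left (by rw [hx]; exact hrβ)]
  have hmax0 : (0:ℝ) < max r ‖z₁‖ := lt_max_of_lt_left hr0
  have hDnorm : ∀ x : K, ‖x‖ = r → ‖x^2 + d*x + b‖ = max r ‖z₁‖ * ‖z₂‖ := by
    intro x hx
    rw [hfac, norm_mul, (hden x hx).1, (hden x hx).2]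
  have hD0 : ∀ x : K, ‖x‖ = r → x^2 + d*x + b ≠ 0 := by
    intro x hx
    have : (0:ℝ) < ‖x^2 + d*x + b‖ := by rw [hDnorm x hx]; positivity
    exact norm_pos_iff.1 this
  -- the key numerator norm
  have hnum : ∀ x y : K, ‖x‖ = r → ‖y‖ = r →
      ‖a*d*(x*y) + a*b*(x+y) - b*(x*y) + b^2‖ = (max r ‖z₁‖ * ‖z₂‖)^2 := by
    intro x y hx hy
    have hxy : ‖x * y‖ = r * r := by rw [norm_mul, hx, hy]
    have hxpy : ‖x + y‖ ≤ r := by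
      refine (ultra_addle x y).trans ?_
      rw [hx, hy, max_self]
    rcases hcase with ⟨h1, h2⟩ | ⟨h1, h2, h3, h4⟩
    · -- case I : r < α, ‖a‖ r < α β ; dominant term b²
      rw [max_eq_right h1.le]
      have hβr : ‖z₂‖ * r < ‖z₁‖ * ‖z₂‖ := by nlinarith [mul_lt_mul_of_pos_left h1 hβ]
      have e1 : ‖a*d*(x*y)‖ < (‖z₁‖ * ‖z₂‖)^2 := by
        rw [norm_mul, norm_mul, hxy]
        have k1 : ‖a‖ * ‖d‖ * (r * r) ≤ (‖a‖ * r) * (‖z₂‖ * r) := by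
          nlinarith [mul_le_mul_of_nonneg_left hdn (by positivity : (0:ℝ) ≤ ‖a‖ * (r * r))]
        nlinarith [k1, mul_lt_mul'' h2 hβr (by positivity) (by positivity)]
      have e2 : ‖a*b*(x+y)‖ < (‖z₁‖ * ‖z₂‖)^2 := by
        rw [norm_mul, norm_mul, hbn]
        have k1 : ‖a‖ * (‖z₁‖ * ‖z₂‖) * ‖x + y‖ ≤ (‖a‖ * (‖z₁‖ * ‖z₂‖)) * r := by
          nlinarith [mul_le_mul_of_nonneg_left hxpy (by positivity : (0:ℝ) ≤ ‖a‖ * (‖z₁‖ * ‖z₂‖))]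
        nlinarith [k1, mul_lt_mul_of_pos_right h2 (mul_pos hα hβ)]
      have e3 : ‖b*(x*y)‖ < (‖z₁‖ * ‖z₂‖)^2 := by
        rw [norm_mul, hbn, hxy]
        have k1 : r * r < ‖z₁‖ * ‖z₂‖ := mul_lt_mul'' h1 hrβ hr0.le hr0.le
        nlinarith [mul_lt_mul_of_pos_left k1 (mul_pos hα hβ)]
      have hb2 : ‖b^2‖ = (‖z₁‖ * ‖z₂‖)^2 := by rw [norm_pow, hbn]
      have hre : a*d*(x*y) + a*b*(x+y) - b*(x*y) + b^2
          = b^2 + (a*d*(x*y) + a*b*(x+y) - b*(x*y)) := by ring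
      rw [hre, ultra_add_eq_left (by rw [hb2]; exact ultra_add3_lt e1 e2 e3), hb2]
    · -- case II : α < r < β, ‖a‖ = β, ‖d‖ = β ; dominant term a d x y
      rw [max_eq_left h1.le]
      have hadn : ‖a*d*(x*y)‖ = (r * ‖z₂‖)^2 := by
        rw [norm_mul, norm_mul, hxy, h3, h4]; ring
      have e2 : ‖a*b*(x+y)‖ < (r * ‖z₂‖)^2 := by
        rw [norm_mul, norm_mul, hbn, h3]
        calc ‖z₂‖ * (‖z₁‖ * ‖z₂‖) * ‖x + y‖ ≤ ‖z₂‖ * (‖z₁‖ * ‖z₂‖) * r :=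
              mul_le_mul_of_nonneg_left hxpy (by positivity)
        _ = ‖z₁‖ * (‖z₂‖ * ‖z₂‖ * r) := by ring
        _ < r * (‖z₂‖ * ‖z₂‖ * r) := mul_lt_mul_of_pos_right h1 (by positivity)
        _ = (r * ‖z₂‖)^2 := by ring
      have e3 : ‖b*(x*y)‖ < (r * ‖z₂‖)^2 := by
        rw [norm_mul, hbn, hxy]
        calc ‖z₁‖ * ‖z₂‖ * (r * r) = ‖z₁‖ * (‖z₂‖ * r * r) := by ring
        _ < ‖z₂‖ * (‖z₂‖ * r * r) := mul_lt_mul_of_pos_right (h1.trans h2) (by positivity)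
        _ = (r * ‖z₂‖)^2 := by ring
      have e4 : ‖b^2‖ < (r * ‖z₂‖)^2 := by
        rw [norm_pow, hbn]
        have k1 : ‖z₁‖ * ‖z₁‖ < r * r := mul_lt_mul'' h1 h1 hα.le hα.le
        calc (‖z₁‖ * ‖z₂‖)^2 = ‖z₁‖ * ‖z₁‖ * (‖z₂‖ * ‖z₂‖) := by ring
        _ < r * r * (‖z₂‖ * ‖z₂‖) := mul_lt_mul_of_pos_right k1 (by positivity)
        _ = (r * ‖z₂‖)^2 := by ring
      have hre : a*d*(x*y) + a*b*(x+y) - b*(x*y) + b^2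
          = a*d*(x*y) + (a*b*(x+y) - b*(x*y) + b^2) := by ring
      rw [hre, ultra_add_eq_left (by
        rw [hadn]
        have : a*b*(x+y) - b*(x*y) + b^2 = a*b*(x+y) + b^2 - b*(x*y) := by ring
        rw [this]
        exact ultra_add3_lt e2 e4 e3), hadn]
  -- the isometry on the sphere
  have hiso : ∀ x y : K, ‖x‖ = r → ‖y‖ = r →
      ‖(a*x^2 + b*x)/(x^2 + d*x + b) - (a*y^2 + b*y)/(y^2 + d*y + b)‖ = ‖x - y‖ := by
    intro x y hx hy
    have hDx := hD0 x hx
    have hDy := hD0 y hy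
    rw [div_sub_div _ _ hDx hDy]
    have hkey : (a*x^2 + b*x) * (y^2 + d*y + b) - (x^2 + d*x + b) * (a*y^2 + b*y)
        = (x - y) * (a*d*(x*y) + a*b*(x+y) - b*(x*y) + b^2) := by ring
    rw [hkey, norm_div, norm_mul, hnum x y hx hy, norm_mul, hDnorm x hx, hDnorm y hy]
    rw [sq, mul_div_assoc, div_self (by positivity), mul_one]
  -- norm of f on the sphere
  have hfnorm : ∀ x : K, ‖x‖ = r → ‖(a*x^2 + b*x)/(x^2 + d*x + b)‖ = r := by
    intro x hx
    have hnum' : ‖a*x^2 + b*x‖ = max r ‖z₁‖ * ‖z₂‖ * r := by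
      have hax : ‖a*x^2‖ = ‖a‖ * (r*r) := by rw [norm_mul, norm_pow, hx]; ring
      have hbx : ‖b*x‖ = ‖z₁‖ * ‖z₂‖ * r := by rw [norm_mul, hbn, hx]
      rcases hcase with ⟨h1, h2⟩ | ⟨h1, h2, h3, h4⟩
      · rw [max_eq_right h1.le, add_comm, ultra_add_eq_left (by
          rw [hax, hbx]; nlinarith [mul_lt_mul_of_pos_right h2 hr0]), hbx]
      · rw [max_eq_left h1.le, ultra_add_eq_left (by
          rw [hax, hbx, h3]
          nlinarith [mul_lt_mul_of_pos_right h1 (mul_pos hβ hr0)]), hax, h3]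
        ring
    rw [norm_div, hnum', hDnorm x hx]
    field_simp
  constructor
  · intro x y hx hy
    exact hiso x y (hsub x hx) (hsub y hy)
  · by_cases hρ0 : 0 ≤ ρ
    · have hρr : ρ < r := by
        by_contra h
        push_neg at h
        have h0 : ‖(0:K) - c‖ ≤ ρ := by
          rw [zero_sub, norm_neg, hc]; exact h
        have := hsub 0 h0
        rw [norm_zero] at this
        exact hr0.ne this
      have hfc : ‖(a*c^2 + b*c)/(c^2 + d*c + b)‖ = r := hfnorm c hc
      ext w
      simp only [Set.mem_image, Metric.mem_closedBall, dist_eq_norm]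
      constructor
      · rintro ⟨x, hx, rfl⟩
        rw [hiso x c (hsub x hx) hc]
        exact hx
      · intro hw
        have hwn : ‖w‖ = r := by
          have h1 : ‖w - (a*c^2 + b*c)/(c^2 + d*c + b)‖
              < ‖(a*c^2 + b*c)/(c^2 + d*c + b)‖ := by
            rw [hfc]; exact lt_of_le_of_lt hw hρr
          have h2 := ultra_add_eq_left h1
          rw [add_sub_cancel] at h2
          rwa [hfc] at h2
        have hwr0 : w ≠ 0 := by
          intro h
          rw [h, norm_zero] at hwn
          exact hr0.ne hwn
        obtain ⟨t, htn, hteq⟩ : ∃ t : K, ‖t‖ = r ∧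
            (a - w)*t^2 + (b - w*d)*t + (-(w*b)) = 0 := by
          by_cases haw : a = w
          · rcases hcase with ⟨h1, h2⟩ | ⟨h1, h2, h3, h4⟩
            · have hwd : ‖w*d‖ < ‖b‖ := by
                rw [norm_mul, hbn, hwn]
                calc r * ‖d‖ ≤ r * ‖z₂‖ := mul_le_mul_of_nonneg_left hdn hr0.le
                _ < ‖z₁‖ * ‖z₂‖ := mul_lt_mul_of_pos_right h1 hβ
              have hbwd : ‖b - w*d‖ = ‖b‖ := ultra_sub_eq_left hwd
              have hbwd0 : b - w*d ≠ 0 := by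
                intro h
                rw [h, norm_zero] at hbwd
                exact hb0 (norm_eq_zero.1 hbwd.symm)
              refine ⟨w*b/(b - w*d), ?_, ?_⟩
              · rw [norm_div, norm_mul, hbwd, hbn, hwn]
                field_simp
              · have hbwd0' : b - a*d ≠ 0 := by rw [haw]; exact hbwd0
                rw [← haw, sub_self, zero_mul, zero_add]
                field_simp [hbwd0']
                ring
            · exfalso
              have : ‖a‖ = r := by rw [haw, hwn]
              rw [h3] at this
              exact (this ▸ h2).false
          · have haw0 : a - w ≠ 0 := sub_ne_zero.2 haw
            have hcond : ‖-(w*b)‖ * ‖a - w‖ < ‖b - w*d‖^2 := by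
              rw [norm_neg, norm_mul, hwn, hbn]
              rcases hcase with ⟨h1, h2⟩ | ⟨h1, h2, h3, h4⟩
              · have hwd : ‖w*d‖ < ‖b‖ := by
                  rw [norm_mul, hbn, hwn]
                  calc r * ‖d‖ ≤ r * ‖z₂‖ := mul_le_mul_of_nonneg_left hdn hr0.le
                  _ < ‖z₁‖ * ‖z₂‖ := mul_lt_mul_of_pos_right h1 hβ
                rw [ultra_sub_eq_left hwd, hbn]
                have hS : ‖a - w‖ ≤ max ‖a‖ r := by
                  rw [← hwn]; exact ultra_suble a w
                rcases le_max_iff.1 hS with hS | hS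
                · calc r * (‖z₁‖ * ‖z₂‖) * ‖a - w‖ ≤ r * (‖z₁‖ * ‖z₂‖) * ‖a‖ :=
                      mul_le_mul_of_nonneg_left hS (by positivity)
                  _ = (‖a‖ * r) * (‖z₁‖ * ‖z₂‖) := by ring
                  _ < (‖z₁‖ * ‖z₂‖) * (‖z₁‖ * ‖z₂‖) :=
                      mul_lt_mul_of_pos_right h2 (by positivity)
                  _ = (‖z₁‖ * ‖z₂‖)^2 := by ring
                · calc r * (‖z₁‖ * ‖z₂‖) * ‖a - w‖ ≤ r * (‖z₁‖ * ‖z₂‖) * r :=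
                      mul_le_mul_of_nonneg_left hS (by positivity)
                  _ = (r * r) * (‖z₁‖ * ‖z₂‖) := by ring
                  _ < (‖z₁‖ * ‖z₂‖) * (‖z₁‖ * ‖z₂‖) :=
                      mul_lt_mul_of_pos_right
                        (mul_lt_mul'' h1 hrβ hr0.le hr0.le) (by positivity)
                  _ = (‖z₁‖ * ‖z₂‖)^2 := by ring
              · have hwd : ‖b‖ < ‖w*d‖ := by
                  rw [norm_mul, hbn, hwn, h4]
                  exact mul_lt_mul_of_pos_right h1 hβ
                have hbwd : ‖b - w*d‖ = ‖w*d‖ := by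
                  have : ‖b - w*d‖ = ‖w*d - b‖ := by rw [← norm_neg]; ring_nf
                  rw [this, ultra_sub_eq_left hwd]
                have hawn : ‖a - w‖ = ‖a‖ := ultra_sub_eq_left (by rw [hwn, h3]; exact h2)
                rw [hbwd, hawn, norm_mul, hwn, h4, h3]
                calc r * (‖z₁‖ * ‖z₂‖) * ‖z₂‖ = ‖z₁‖ * (r * ‖z₂‖ * ‖z₂‖) := by ring
                _ < r * (r * ‖z₂‖ * ‖z₂‖) := mul_lt_mul_of_pos_right h1 (by positivity)
                _ = (r * ‖z₂‖)^2 := by ring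
            obtain ⟨t₁, t₂, e₁, e₂, n₁, n₂⟩ := quad_roots (a - w) (b - w*d) (-(w*b)) haw0 hcond
            rcases hcase with ⟨h1, h2⟩ | ⟨h1, h2, h3, h4⟩
            · refine ⟨t₁, ?_, e₁⟩
              have hwd : ‖w*d‖ < ‖b‖ := by
                rw [norm_mul, hbn, hwn]
                calc r * ‖d‖ ≤ r * ‖z₂‖ := mul_le_mul_of_nonneg_left hdn hr0.le
                _ < ‖z₁‖ * ‖z₂‖ := mul_lt_mul_of_pos_right h1 hβ
              rw [n₁, ultra_sub_eq_left hwd, norm_neg, norm_mul, hwn, hbn]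
              field_simp
            · refine ⟨t₂, ?_, e₂⟩
              have hwd : ‖b‖ < ‖w*d‖ := by
                rw [norm_mul, hbn, hwn, h4]
                exact mul_lt_mul_of_pos_right h1 hβ
              have hbwd : ‖b - w*d‖ = ‖w*d‖ := by
                have : ‖b - w*d‖ = ‖w*d - b‖ := by rw [← norm_neg]; ring_nf
                rw [this, ultra_sub_eq_left hwd]
              have hawn : ‖a - w‖ = ‖a‖ := ultra_sub_eq_left (by rw [hwn, h3]; exact h2)
              rw [n₂, hbwd, hawn, norm_mul, hwn, h4, h3]
              field_simp
        have hft : (a*t^2 + b*t)/(t^2 + d*t + b) = w := by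
          rw [div_eq_iff (hD0 t htn)]
          linear_combination hteq
        refine ⟨t, ?_, hft⟩
        have := hiso t c htn hc
        rw [hft] at this
        rw [← this]
        exact hw
    · have hρneg : ρ < 0 := lt_of_not_ge hρ0
      rw [Metric.closedBall_eq_empty.2 hρneg, Metric.closedBall_eq_empty.2 hρneg,
        Set.image_empty]
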